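/- Let n ≥ 1 and let x p : ℝ → (Fin n → ℝ) be differentiable curves such that for every t the values x_1(t),…,x_n(t) are pairwise distinct, and suppose the Calogero–Moser equations of motion hold: x_i'(t) = p_i(t) and p_i'(t) = −2·∑_{j≠i} (x_i(t) − x_j(t))^{−3} for all i and t. Let L(t) be the Calogero–Moser Lax matrix of (x(t),p(t)) and let B(t) be the matrix with entries B_{ii}(t) = ∑_{l≠i} (x_i(t) − x_l(t))^{−2} and B_{ij}(t) = −(x_i(t) − x_j(t))^{−2} for i ≠ j. Then the entrywise derivative of L satisfies the Lax equation L'(t) = L(t)·B(t) − B(t)·L(t) for all t. -/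

import Mathlib

open Finset

/-- The Calogero–Moser Lax matrix: `L i i = p i`, `L i j = 1/(x i - x j)` for `i ≠ j`. -/
noncomputable def laxMatrix {n : ℕ} (x p : Fin n → ℝ) : Matrix (Fin n) (Fin n) ℝ :=
  Matrix.of fun i j => if i = j then p i else 1 / (x i - x j)

/-- The auxiliary matrix `B` of the Lax pair: `B i i = ∑_{l ≠ i} (x i - x l)⁻²`,
`B i j = -(x i - x j)⁻²` for `i ≠ j`. -/
noncomputable def cmB {n : ℕ} (x : Fin n → ℝ) : Matrix (Fin n) (Fin n) ℝ :=
  Matrix.of fun i j =>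
    if i = j then ∑ l ∈ univ.filter (fun l => l ≠ i), ((x i - x l) ^ 2)⁻¹
    else -((x i - x j) ^ 2)⁻¹

lemma entry_diag {n : ℕ} (X P : Fin n → ℝ) (hX : Function.Injective X) (i : Fin n) :
    (laxMatrix X P * cmB X - cmB X * laxMatrix X P) i i
      = -2 * ∑ k ∈ univ.filter (fun k => k ≠ i), ((X i - X k) ^ 3)⁻¹ := by
  have hne : ∀ a b : Fin n, a ≠ b → X a - X b ≠ 0 :=
    fun a b h => sub_ne_zero.2 fun e => h (hX e)
  rw [Matrix.sub_apply, Matrix.mul_apply, Matrix.mul_apply, ← Finset.sum_sub_distrib,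
    Finset.mul_sum, Finset.sum_filter]
  refine Finset.sum_congr rfl fun k _ => ?_
  by_cases hk : k = i
  · subst hk; simp [laxMatrix, cmB, mul_comm]
  · have hik : ¬ i = k := fun h => hk h.symm
    simp only [laxMatrix, cmB, Matrix.of_apply, if_neg hk, if_neg hik, hk, if_true,
      ite_not, if_neg hik]
    simp only [if_false]
    have h1 := hne i k hik
    have h2 := hne k i hk
    field_simp
    ring

lemma entry_offdiag {n : ℕ} (X P : Fin n → ℝ) (hX : Function.Injective X) (i j : Fin n)
    (hij : i ≠ j) :
    (laxMatrix X P * cmB X - cmB X * laxMatrix X P) i j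
      = -(P i - P j) * ((X i - X j) ^ 2)⁻¹ := by
  have hne : ∀ a b : Fin n, a ≠ b → X a - X b ≠ 0 :=
    fun a b h => sub_ne_zero.2 fun e => h (hX e)
  have hji : j ≠ i := hij.symm
  rw [Matrix.sub_apply, Matrix.mul_apply, Matrix.mul_apply, ← Finset.sum_sub_distrib,
    ← Finset.sum_erase_add _ _ (Finset.mem_univ i),
    ← Finset.sum_erase_add _ _ (Finset.mem_erase.mpr ⟨hji, Finset.mem_univ j⟩)]
  have hS : ∑ k ∈ (univ.erase i).erase j,
      (laxMatrix X P i k * cmB X k j - cmB X i k * laxMatrix X P k j)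
      = ∑ k ∈ (univ.erase i).erase j,
        (1 / (X i - X j)) * (((X i - X k) ^ 2)⁻¹ - ((X j - X k) ^ 2)⁻¹) := by
    refine Finset.sum_congr rfl fun k hk => ?_
    have hkj : k ≠ j := (Finset.mem_erase.mp hk).1
    have hki : k ≠ i := (Finset.mem_erase.mp ((Finset.mem_erase.mp hk).2)).1
    simp only [laxMatrix, cmB, Matrix.of_apply, if_neg hki.symm, if_neg hkj, if_neg hki,
      if_neg hkj.symm]
    have h1 := hne i k hki.symm
    have h2 := hne k j hkj
    have h3 := hne i j hij
    have h4 := hne j k hkj.symm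
    field_simp
    ring
  rw [hS]
  simp only [laxMatrix, cmB, Matrix.of_apply, if_pos rfl, if_neg hij, if_neg hji, eq_self_iff_true,
    ↓reduceIte]
  have hfi : (univ.filter (fun l => l ≠ i)) = univ.erase i := Finset.filter_ne' univ i
  have hfj : (univ.filter (fun l => l ≠ j)) = univ.erase j := Finset.filter_ne' univ j
  rw [hfi, hfj, ← Finset.sum_erase_add _ _ (Finset.mem_erase.mpr ⟨hji, Finset.mem_univ j⟩),
    ← Finset.sum_erase_add _ _ (Finset.mem_erase.mpr ⟨hij, Finset.mem_univ i⟩),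
    Finset.erase_right_comm, ← Finset.mul_sum, Finset.sum_sub_distrib]
  have h3 := hne i j hij
  have h4 := hne j i hji
  field_simp
  ring

/-- Along solutions of the Calogero–Moser equations of motion, the Lax matrix satisfies
the Lax equation `L' = L·B − B·L` entrywise. -/
theorem lax_equation_CM {n : ℕ} (hn : 1 ≤ n) (x p : ℝ → Fin n → ℝ)
    (hdist : ∀ t : ℝ, Function.Injective (x t))
    (hx : ∀ (i : Fin n) (t : ℝ), HasDerivAt (fun s => x s i) (p t i) t)
    (hp : ∀ (i : Fin n) (t : ℝ), HasDerivAt (fun s => p s i)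
      (-2 * ∑ j ∈ univ.filter (fun j => j ≠ i), ((x t i - x t j) ^ 3)⁻¹) t) :
    ∀ (t : ℝ) (i j : Fin n),
      HasDerivAt (fun s => laxMatrix (x s) (p s) i j)
        ((laxMatrix (x t) (p t) * cmB (x t) - cmB (x t) * laxMatrix (x t) (p t)) i j) t := by
  intro t i j
  by_cases hij : i = j
  · subst hij
    rw [entry_diag (x t) (p t) (hdist t) i]
    have hfun : (fun s => laxMatrix (x s) (p s) i i) = fun s => p s i := by
      funext s; simp [laxMatrix]
    rw [hfun]
    exact hp i t
  · rw [entry_offdiag (x t) (p t) (hdist t) i j hij]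
    have hfun : (fun s => laxMatrix (x s) (p s) i j) = fun s => (x s i - x s j)⁻¹ := by
      funext s; simp [laxMatrix, hij, one_div]
    rw [hfun]
    have hd : HasDerivAt (fun s => (x s i - x s j)⁻¹) _ t := ((hx i t).sub (hx j t)).inv (sub_ne_zero.2 fun e => hij (hdist t e))
    simpa [div_eq_mul_inv] using hd
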